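/- arXiv:2307.08040 — 2 statements merged into one kernel-verified Lean document; each statement's English description precedes it below -/
import Mathlib

section
/- Let R : [a,b] → ℝ be continuous, concave on a subinterval [u,v] ⊆ [a,b], and convex on [a,u] and on [v,b]. Let g be an affine function tangent to R at a point z* ∈ [u,v] (i.e., g(z*) = R(z*) and g(z) ≥ R(z) for z in a neighborhood within [u,v]). Define ν(z) = max{g(z), R(z)}. Then ν is convex on [a,b]. -/
/-- Auxiliary: gluing two convex pieces of a nonnegative function vanishing
at the junction point, secant inequality for `x ≤ z`. -/
lemma glue_aux {a u b : ℝ} {f : ℝ → ℝ} (_hau : a ≤ u) (_hub : u ≤ b)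
    (h1 : ConvexOn ℝ (Set.Icc a u) f) (h2 : ConvexOn ℝ (Set.Icc u b) f)
    (hpos : ∀ w ∈ Set.Icc a b, 0 ≤ f w) (hu0 : f u = 0) :
    ∀ x ∈ Set.Icc a b, ∀ z ∈ Set.Icc a b, x ≤ z → ∀ t s : ℝ, 0 ≤ t → 0 ≤ s →
      t + s = 1 → f (t * x + s * z) ≤ t * f x + s * f z := by
  intro x hx z hz hxz t s ht hs hts
  by_cases hzu : z ≤ u
  · simpa [smul_eq_mul] using h1.2 ⟨hx.1, le_trans hxz hzu⟩ ⟨hz.1, hzu⟩ ht hs hts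
  by_cases hux : u ≤ x
  · simpa [smul_eq_mul] using h2.2 ⟨hux, hx.2⟩ ⟨le_trans hux hxz, hz.2⟩ ht hs hts
  push_neg at hzu hux
  obtain ⟨y, hy⟩ : ∃ y, y = t * x + s * z := ⟨_, rfl⟩
  have hx1 : y - x = s * (z - x) := by rw [hy]; linear_combination x * hts
  have hz1 : z - y = t * (z - x) := by rw [hy]; linear_combination (-z) * hts
  have hxy : x ≤ y := by nlinarith [mul_nonneg hs (sub_nonneg.2 hxz)]
  have hyz : y ≤ z := by nlinarith [mul_nonneg ht (sub_nonneg.2 hxz)]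
  have hfx : 0 ≤ f x := hpos x hx
  have hfz : 0 ≤ f z := hpos z hz
  rw [← hy]
  rcases le_total y u with hyu | huy
  · -- left piece
    have hden : 0 < u - x := by linarith
    have hne : u - x ≠ 0 := ne_of_gt hden
    obtain ⟨e, he⟩ : ∃ e, e = (u - y) / (u - x) := ⟨_, rfl⟩
    have he0 : 0 ≤ e := he ▸ div_nonneg (by linarith) hden.le
    have he1 : e ≤ 1 := by rw [he, div_le_one hden]; linarith
    have hpt : e * x + (1 - e) * u = y := by rw [he]; field_simp; ring
    have hconv := h1.2 ⟨hx.1, hux.le⟩ ⟨le_trans hx.1 hux.le, le_refl u⟩ he0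
      (by linarith : (0:ℝ) ≤ 1 - e) (by ring)
    rw [smul_eq_mul, smul_eq_mul, smul_eq_mul, smul_eq_mul, hpt, hu0] at hconv
    have hsz : s * (u - z) ≤ 0 := mul_nonpos_of_nonneg_of_nonpos hs (by linarith)
    have hexp : u - y = t * (u - x) + s * (u - z) := by
      rw [hy]; linear_combination (-u) * hts
    have het : e ≤ t := by
      rw [he, div_le_iff₀ hden]
      linarith
    have := mul_le_mul_of_nonneg_right het hfx
    nlinarith
  · -- right piece
    have hden : 0 < z - u := by linarith
    have hne : z - u ≠ 0 := ne_of_gt hden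
    obtain ⟨e, he⟩ : ∃ e, e = (y - u) / (z - u) := ⟨_, rfl⟩
    have he0 : 0 ≤ e := he ▸ div_nonneg (by linarith) hden.le
    have he1 : e ≤ 1 := by rw [he, div_le_one hden]; linarith
    have hpt : (1 - e) * u + e * z = y := by rw [he]; field_simp; ring
    have hconv := h2.2 ⟨le_refl u, le_trans hzu.le hz.2⟩ ⟨hzu.le, hz.2⟩
      (by linarith : (0:ℝ) ≤ 1 - e) he0 (by ring)
    rw [smul_eq_mul, smul_eq_mul, smul_eq_mul, smul_eq_mul, hpt, hu0] at hconv
    have htx : t * (x - u) ≤ 0 := mul_nonpos_of_nonneg_of_nonpos ht (by linarith)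
    have hexp : y - u = t * (x - u) + s * (z - u) := by
      rw [hy]; linear_combination u * hts
    have hes : e ≤ s := by
      rw [he, div_le_iff₀ hden]
      linarith
    have := mul_le_mul_of_nonneg_right hes hfz
    nlinarith

/-- Gluing two convex pieces of a nonnegative function vanishing at the
junction point. -/
lemma glue {a u b : ℝ} {f : ℝ → ℝ} (hau : a ≤ u) (hub : u ≤ b)
    (h1 : ConvexOn ℝ (Set.Icc a u) f) (h2 : ConvexOn ℝ (Set.Icc u b) f)
    (hpos : ∀ w ∈ Set.Icc a b, 0 ≤ f w) (hu0 : f u = 0) :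
    ConvexOn ℝ (Set.Icc a b) f := by
  refine ⟨convex_Icc a b, ?_⟩
  intro x hx z hz t s ht hs hts
  simp only [smul_eq_mul]
  rcases le_total x z with hxz | hzx
  · exact glue_aux hau hub h1 h2 hpos hu0 x hx z hz hxz t s ht hs hts
  · have h := glue_aux hau hub h1 h2 hpos hu0 z hz x hx hzx s t hs ht (by linarith)
    have harg : t * x + s * z = s * z + t * x := by ring
    rw [harg]
    linarith

/-- Gluing a tangent line over the concave middle piece: if `R` is continuous
on `[a,b]`, concave on `[u,v]` and convex on `[a,u]` and `[v,b]`, and `g` is an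
affine function tangent to `R` at `z* ∈ [u,v]` with `g ≥ R` on `[u,v]`, then
`ν = max (g, R)` is convex on `[a,b]`. -/
theorem upper_closure_convex (a b u v zstar γ : ℝ)
    (hau : a ≤ u) (huv : u ≤ v) (hvb : v ≤ b)
    (R : ℝ → ℝ) (hRcont : ContinuousOn R (Set.Icc a b))
    (hconc : ConcaveOn ℝ (Set.Icc u v) R)
    (hconv₁ : ConvexOn ℝ (Set.Icc a u) R)
    (hconv₂ : ConvexOn ℝ (Set.Icc v b) R)
    (hz : zstar ∈ Set.Icc u v)
    (g : ℝ → ℝ) (hg : ∀ z, g z = γ * (z - zstar) + R zstar)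
    (htang : ∀ z ∈ Set.Icc u v, R z ≤ g z) :
    ConvexOn ℝ (Set.Icc a b) (fun z => max (g z) (R z)) := by
  have hgaff : ∀ x z t s : ℝ, t + s = 1 → g (t * x + s * z) = t * g x + s * g z := by
    intro x z t s hts
    simp only [hg]
    linear_combination (γ * zstar - R zstar) * hts
  have hgconv : ∀ S : Set ℝ, Convex ℝ S → ConvexOn ℝ S g := by
    intro S hS
    exact ⟨hS, fun x _ z _ t s ht hs hts => by
      simp only [smul_eq_mul]; rw [hgaff x z t s hts]⟩
  have hgconc : ∀ S : Set ℝ, Convex ℝ S → ConcaveOn ℝ S g := by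
    intro S hS
    exact ⟨hS, fun x _ z _ t s ht hs hts => by
      simp only [smul_eq_mul]; rw [hgaff x z t s hts]⟩
  set φ : ℝ → ℝ := fun z => max (R z - g z) 0 with hφ
  have hφpos : ∀ w, 0 ≤ φ w := fun w => le_max_right _ _
  have hφu : φ u = 0 := max_eq_right (sub_nonpos.2 (htang u ⟨le_refl u, huv⟩))
  have hφv : φ v = 0 := max_eq_right (sub_nonpos.2 (htang v ⟨huv, le_refl v⟩))
  have hφleft : ConvexOn ℝ (Set.Icc a u) φ :=
    (hconv₁.sub (hgconc _ (convex_Icc a u))).sup (convexOn_const 0 (convex_Icc a u))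
  have hφright : ConvexOn ℝ (Set.Icc v b) φ :=
    (hconv₂.sub (hgconc _ (convex_Icc v b))).sup (convexOn_const 0 (convex_Icc v b))
  have hφmid : ConvexOn ℝ (Set.Icc u v) φ := by
    refine ⟨convex_Icc u v, ?_⟩
    intro x hx z hz t s ht hs hts
    have hw : t • x + s • z ∈ Set.Icc u v := (convex_Icc u v) hx hz ht hs hts
    have hL : φ (t • x + s • z) = 0 :=
      max_eq_right (sub_nonpos.2 (htang _ hw))
    rw [hL]
    have h1 := hφpos x
    have h2 := hφpos z
    simp only [smul_eq_mul]
    positivity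
  have hφav : ConvexOn ℝ (Set.Icc a v) φ :=
    glue hau huv hφleft hφmid (fun w _ => hφpos w) hφu
  have hφab : ConvexOn ℝ (Set.Icc a b) φ :=
    glue (le_trans hau huv) hvb hφav hφright (fun w _ => hφpos w) hφv
  have hkey : (fun z => max (g z) (R z)) = fun z => g z + φ z := by
    funext z
    rcases le_total (R z) (g z) with h | h
    · rw [hφ]
      simp only
      rw [max_eq_left h, max_eq_right (by linarith), add_zero]
    · rw [hφ]
      simp only
      rw [max_eq_right h, max_eq_left (by linarith)]
      ring
  rw [hkey]
  exact (hgconv _ (convex_Icc a b)).add hφab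
end

section
/- Let F be a CDF on [a,b], and let [z̲, z̄] ⊆ [a,b] with z* = E_F[S | z̲ ≤ S ≤ z̄] (assuming F(z̄) > F(z̲)). Define G by G(s) = F(s) for s ≤ z̲, G(s) = F(z̲) for z̲ < s < z*, G(s) = F(z̄) for z* ≤ s < z̄, and G(s) = F(s) for s ≥ z̄. Then G is a mean-preserving contraction of F (G ⪯ F). -/
open MeasureTheory intervalIntegral

/-- `G ⪯ F`: mean-preserving contraction order for CDFs on `[a,b]`. -/
def MPC (a b : ℝ) (G F : ℝ → ℝ) : Prop :=
  (∀ s ∈ Set.Icc a b, ∫ z in a..s, G z ≤ ∫ z in a..s, F z) ∧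
    (∫ z in a..b, G z) = ∫ z in a..b, F z

lemma stieltjes_ibp (F : StieltjesFunction ℝ) {zl zh : ℝ} (h : zl ≤ zh) :
    ∫ z in zl..zh, F z
      = zh * F zh - zl * F zl - ∫ z in Set.Ioc zl zh, z ∂F.measure := by
  set μ := F.measure.restrict (Set.Ioc zl zh) with hμ
  have hfin : IsFiniteMeasure μ := by
    constructor
    rw [hμ, Measure.restrict_apply_univ, F.measure_Ioc]
    exact ENNReal.ofReal_lt_top
  have hμuniv : (μ Set.univ).toReal = F zh - F zl := by
    rw [hμ, Measure.restrict_apply_univ, F.measure_Ioc,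
      ENNReal.toReal_ofReal (by linarith [F.mono h])]
  have hae : ∀ᵐ z ∂μ, z ∈ Set.Ioc zl zh := ae_restrict_mem measurableSet_Ioc
  have hint : Integrable (fun z => z - zl) μ := by
    constructor
    · exact (continuous_id.sub continuous_const).aestronglyMeasurable
    · apply HasFiniteIntegral.of_bounded (C := zh - zl)
      filter_upwards [hae] with z hz
      rw [Real.norm_eq_abs, abs_of_nonneg (by linarith [hz.1.le])]
      linarith [hz.2]
  have hnn : 0 ≤ᵐ[μ] fun z => z - zl := by
    filter_upwards [hae] with z hz
    simp [hz.1.le]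
  have key := hint.integral_eq_integral_meas_lt hnn
  have hintId : Integrable (fun z : ℝ => z) μ := by
    have heq : (fun z : ℝ => z) = fun z => (z - zl) + zl := by funext z; ring
    rw [heq]; exact hint.add (integrable_const zl)
  have hLHS : ∫ z, (z - zl) ∂μ
      = (∫ z in Set.Ioc zl zh, z ∂F.measure) - zl * (F zh - F zl) := by
    rw [integral_sub hintId (integrable_const zl), MeasureTheory.integral_const, measureReal_def, hμuniv,
      smul_eq_mul, hμ]
    ring
  have hFmono := F.mono
  have hFint : IntervalIntegrable (fun z => F z) volume zl zh :=
    hFmono.intervalIntegrable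
  have hRHS : (∫ t in Set.Ioi (0:ℝ), ENNReal.toReal (μ {a : ℝ | t < a - zl}))
      = (zh - zl) * F zh - ∫ z in zl..zh, F z := by
    have h1 : ∀ t ∈ Set.Ioi (0:ℝ),
        ENNReal.toReal (μ {a : ℝ | t < a - zl})
          = (Set.Ioc (0:ℝ) (zh - zl)).indicator (fun t => F zh - F (zl + t)) t := by
      intro t ht
      have ht' : (0:ℝ) < t := ht
      have hset : {a : ℝ | t < a - zl} = Set.Ioi (zl + t) := by
        ext a; simp only [Set.mem_setOf_eq, Set.mem_Ioi]; constructor <;> intro <;> linarith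
      rw [hset, hμ, Measure.restrict_apply measurableSet_Ioi]
      have hset2 : Set.Ioi (zl + t) ∩ Set.Ioc zl zh = Set.Ioc (zl + t) zh := by
        ext a
        simp only [Set.mem_inter_iff, Set.mem_Ioi, Set.mem_Ioc]
        constructor
        · rintro ⟨h1, h2, h3⟩; exact ⟨h1, h3⟩
        · rintro ⟨h1, h2⟩; exact ⟨h1, by linarith, h2⟩
      rw [hset2, F.measure_Ioc, ENNReal.toReal_ofReal']
      by_cases hcase : t ≤ zh - zl
      · rw [Set.indicator_of_mem (Set.mem_Ioc.mpr ⟨ht', hcase⟩)]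
        exact max_eq_left (by linarith [hFmono (by linarith : zl + t ≤ zh)])
      · rw [Set.indicator_of_notMem (by simp [Set.mem_Ioc]; intro; linarith)]
        exact max_eq_right (by linarith [hFmono (by linarith : zh ≤ zl + t)])
    rw [setIntegral_congr_fun measurableSet_Ioi h1,
      MeasureTheory.integral_indicator measurableSet_Ioc,
      Measure.restrict_restrict measurableSet_Ioc]
    have : Set.Ioc (0:ℝ) (zh - zl) ∩ Set.Ioi 0 = Set.Ioc (0:ℝ) (zh - zl) := by
      apply Set.inter_eq_left.mpr
      exact Set.Ioc_subset_Ioi_self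
    rw [this, ← intervalIntegral.integral_of_le (by linarith : (0:ℝ) ≤ zh - zl)]
    have hcomp : IntervalIntegrable (fun t => F (zl + t)) volume 0 (zh - zl) := by
      apply Monotone.intervalIntegrable
      intro x y hxy
      exact hFmono (by linarith)
    rw [intervalIntegral.integral_sub intervalIntegrable_const hcomp,
      intervalIntegral.integral_const, intervalIntegral.integral_comp_add_left (fun z => F z) zl]
    norm_num
  simp only [measureReal_def] at key
  rw [hLHS, hRHS] at key
  linarith [key]

/-- The posterior-mean distribution of a monotone partitional mechanism that
pools `[z̲, z̄]` into its conditional mean `z*` and reveals states outside is a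
mean-preserving contraction of the prior `F`. -/
theorem pooled_cdf_mpc (a b zl zh zstar : ℝ)
    (hazl : a ≤ zl) (hzlzh : zl ≤ zh) (hzhb : zh ≤ b)
    (F : StieltjesFunction ℝ) (hF : F zl < F zh)
    (hzstar : zstar =
      (∫ z in Set.Ioc zl zh, z ∂F.measure) / (F zh - F zl))
    (G : ℝ → ℝ)
    (hG : ∀ s, G s = if s ≤ zl then F s
      else if s < zstar then F zl
      else if s < zh then F zh
      else F s) :
    MPC a b G F := by
  have hFle : F zl ≤ F zh := hF.le
  have hd : (0:ℝ) < F zh - F zl := by linarith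
  have hzlh : zl < zh := by
    rcases lt_or_ge zl zh with h | h
    · exact h
    · linarith [F.mono h]
  -- the measure of the pooled interval
  have hmeas : (F.measure (Set.Ioc zl zh)).toReal = F zh - F zl := by
    rw [F.measure_Ioc, ENNReal.toReal_ofReal (by linarith)]
  set m := ∫ z in Set.Ioc zl zh, z ∂F.measure with hm_def
  have hm : m = zstar * (F zh - F zl) := by
    rw [hzstar]; field_simp
  -- bounds on zstar
  have hfin : F.measure (Set.Ioc zl zh) ≠ ⊤ := by
    rw [F.measure_Ioc]; exact ENNReal.ofReal_ne_top
  have hfinM : IsFiniteMeasure (F.measure.restrict (Set.Ioc zl zh)) :=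
    ⟨by rw [Measure.restrict_apply_univ]; exact hfin.lt_top⟩
  have hintm : IntegrableOn (fun z : ℝ => z) (Set.Ioc zl zh) F.measure := by
    constructor
    · exact continuous_id.aestronglyMeasurable
    · apply HasFiniteIntegral.of_bounded (C := |zl| + |zh|)
      filter_upwards [ae_restrict_mem measurableSet_Ioc] with z hz
      rw [Real.norm_eq_abs]
      rcases abs_le.mp (le_refl |zl|) with ⟨h1, h2⟩
      rcases abs_le.mp (le_refl |zh|) with ⟨h3, h4⟩
      rw [abs_le]
      constructor <;> [linarith [hz.1.le]; linarith [hz.2]]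
  have hconst : ∀ c : ℝ, ∫ _z in Set.Ioc zl zh, c ∂F.measure = (F zh - F zl) * c := by
    intro c
    rw [setIntegral_const, measureReal_def, hmeas, smul_eq_mul]
  have hm_ub : m ≤ (F zh - F zl) * zh := by
    rw [hm_def, ← hconst zh]
    apply setIntegral_mono_on hintm (integrableOn_const hfin)
      measurableSet_Ioc
    exact fun x hx => hx.2
  have hm_lb : (F zh - F zl) * zl ≤ m := by
    rw [hm_def, ← hconst zl]
    apply setIntegral_mono_on (integrableOn_const hfin) hintm
      measurableSet_Ioc
    exact fun x hx => hx.1.le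
  have hzstar_lb : zl ≤ zstar := by
    rw [hzstar]
    rw [le_div_iff₀ hd]
    linarith
  have hzstar_ub : zstar ≤ zh := by
    rw [hzstar, div_le_iff₀ hd]
    linarith
  -- G is monotone
  have hGmono : Monotone G := by
    intro x y hxy
    rw [hG x, hG y]
    split_ifs <;> first
      | exact F.mono (by linarith)
      | linarith [F.mono hxy]
  have hGint : ∀ u v : ℝ, IntervalIntegrable G volume u v :=
    fun u v => hGmono.intervalIntegrable
  have hFint : ∀ u v : ℝ, IntervalIntegrable (fun z => (F z : ℝ)) volume u v :=
    fun u v => F.mono.intervalIntegrable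
  -- middle equality
  have Hmid : ∫ z in zl..zh, G z = ∫ z in zl..zh, F z := by
    rw [← integral_add_adjacent_intervals (hGint zl zstar) (hGint zstar zh)]
    have hne : ∀ᵐ x : ℝ, x ≠ zstar := by
      have hset : {x : ℝ | ¬ x ≠ zstar} = {zstar} := by ext x; simp
      rw [ae_iff, hset]
      exact Real.volume_singleton
    have e1 : ∫ z in zl..zstar, G z = (zstar - zl) * F zl := by
      have : ∫ z in zl..zstar, G z = ∫ _z in zl..zstar, (F zl : ℝ) := by
        apply intervalIntegral.integral_congr_ae
        filter_upwards [hne] with x hx hxm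
        rw [Set.uIoc_of_le hzstar_lb] at hxm
        rw [hG x, if_neg (not_le.mpr hxm.1), if_pos (lt_of_le_of_ne hxm.2 hx)]
      rw [this, intervalIntegral.integral_const, smul_eq_mul]
    have e2 : ∫ z in zstar..zh, G z = (zh - zstar) * F zh := by
      have : ∫ z in zstar..zh, G z = ∫ _z in zstar..zh, (F zh : ℝ) := by
        apply intervalIntegral.integral_congr_ae
        apply Filter.Eventually.of_forall
        intro x hxm
        rw [Set.uIoc_of_le hzstar_ub] at hxm
        rw [hG x, if_neg (by push_neg; linarith [hxm.1]), if_neg (by push_neg; linarith [hxm.1])]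
        by_cases hxz : x < zh
        · rw [if_pos hxz]
        · rw [if_neg hxz]
          have : x = zh := le_antisymm hxm.2 (not_lt.mp hxz)
          rw [this]
      rw [this, intervalIntegral.integral_const, smul_eq_mul]
    rw [e1, e2, stieltjes_ibp F hzlzh, ← hm_def, hm]
    ring
  -- equal on [a, zl] and on [zh, b]
  have e_low : ∀ u v : ℝ, u ≤ v → v ≤ zl → ∫ z in u..v, G z = ∫ z in u..v, F z := by
    intro u v huv hvz
    apply intervalIntegral.integral_congr
    intro z hz
    rw [Set.uIcc_of_le huv] at hz
    rw [hG z, if_pos (by linarith [hz.2])]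
  have e_high : ∀ u v : ℝ, zh ≤ u → u ≤ v → ∫ z in u..v, G z = ∫ z in u..v, F z := by
    intro u v hzu huv
    apply intervalIntegral.integral_congr
    intro z hz
    rw [Set.uIcc_of_le huv] at hz
    have hz1 : zh ≤ z := le_trans hzu hz.1
    rw [hG z, if_neg (by push_neg; linarith), if_neg (by push_neg; linarith),
      if_neg (by push_neg; linarith)]
  have Hab : ∫ z in a..zh, G z = ∫ z in a..zh, F z := by
    rw [← integral_add_adjacent_intervals (hGint a zl) (hGint zl zh),
      ← integral_add_adjacent_intervals (hFint a zl) (hFint zl zh),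
      e_low a zl hazl le_rfl, Hmid]
  constructor
  · intro s hs
    obtain ⟨has, hsb⟩ := hs
    by_cases h1 : s ≤ zl
    · exact le_of_eq (e_low a s has h1)
    push_neg at h1
    by_cases h2 : s < zstar
    · rw [← integral_add_adjacent_intervals (hGint a zl) (hGint zl s),
        ← integral_add_adjacent_intervals (hFint a zl) (hFint zl s)]
      apply add_le_add (le_of_eq (e_low a zl hazl le_rfl))
      apply intervalIntegral.integral_mono_on h1.le (hGint zl s) (hFint zl s)
      intro x hx
      rw [hG x]
      by_cases hxl : x ≤ zl
      · rw [if_pos hxl]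
      · rw [if_neg hxl, if_pos (by linarith [hx.2])]
        exact F.mono hx.1
    push_neg at h2
    by_cases h3 : s ≤ zh
    · have hsumG := integral_add_adjacent_intervals (hGint a s) (hGint s zh)
      have hsumF := integral_add_adjacent_intervals (hFint a s) (hFint s zh)
      have hmono : ∫ z in s..zh, F z ≤ ∫ z in s..zh, G z := by
        apply intervalIntegral.integral_mono_on h3 (hFint s zh) (hGint s zh)
        intro x hx
        rw [hG x]
        by_cases hxl : x ≤ zl
        · rw [if_pos hxl]
        · rw [if_neg hxl, if_neg (by push_neg; linarith [hx.1])]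
          by_cases hxh : x < zh
          · rw [if_pos hxh]
            exact F.mono hx.2
          · rw [if_neg hxh]
      linarith [Hab, hsumG, hsumF, hmono]
    push_neg at h3
    rw [← integral_add_adjacent_intervals (hGint a zh) (hGint zh s),
      ← integral_add_adjacent_intervals (hFint a zh) (hFint zh s),
      Hab, e_high zh s le_rfl h3.le]
  · rw [← integral_add_adjacent_intervals (hGint a zh) (hGint zh b),
      ← integral_add_adjacent_intervals (hFint a zh) (hFint zh b),
      Hab, e_high zh b le_rfl hzhb]
end
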